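/- For any tree T without isolated vertices, γ_gr^t(T) = 2·bc(T), where bc(T) is the minimum number of complete bipartite subgraphs needed to cover all edges of T; moreover bc(T) equals the vertex cover number β(T) of T. -/

import Mathlib

open SimpleGraph

/-- A legal open neighborhood sequence in `G`. -/
def IsOpenLegal {α : Type*} (G : SimpleGraph α) (L : List α) : Prop :=
  L.Nodup ∧ ∀ i : Fin L.length, ∃ w, G.Adj (L.get i) w ∧
    ∀ j : Fin L.length, j < i → ¬ G.Adj (L.get j) w

/-- The Grundy total domination number of `G`. -/
noncomputable def grundyT {α : Type*} (G : SimpleGraph α) : ℕ :=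
  sSup {n | ∃ L : List α, IsOpenLegal G L ∧ L.length = n}

/-- A legal closed neighborhood (dominating) sequence in `G`. -/
def IsClosedLegal {α : Type*} (G : SimpleGraph α) (L : List α) : Prop :=
  L.Nodup ∧ ∀ i : Fin L.length, ∃ w, (G.Adj (L.get i) w ∨ L.get i = w) ∧
    ∀ j : Fin L.length, j < i → ¬ (G.Adj (L.get j) w ∨ L.get j = w)

/-- The Grundy domination number of `G`. -/
noncomputable def grundyDom {α : Type*} (G : SimpleGraph α) : ℕ :=
  sSup {n | ∃ L : List α, IsClosedLegal G L ∧ L.length = n}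

/-- The direct (tensor) product of simple graphs. -/
def directProd {α β : Type*} (G : SimpleGraph α) (H : SimpleGraph β) : SimpleGraph (α × β) where
  Adj x y := G.Adj x.1 y.1 ∧ H.Adj x.2 y.2
  symm := ⟨fun _ _ h => ⟨h.1.symm, h.2.symm⟩⟩
  loopless := ⟨fun x h => G.loopless.irrefl x.1 h.1⟩

/-- The lexicographic product of simple graphs. -/
def lexProd {α β : Type*} (G : SimpleGraph α) (H : SimpleGraph β) : SimpleGraph (α × β) where
  Adj x y := G.Adj x.1 y.1 ∨ (x.1 = y.1 ∧ H.Adj x.2 y.2)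
  symm := ⟨by
    rintro x y (h | ⟨h1, h2⟩)
    · exact Or.inl h.symm
    · exact Or.inr ⟨h1.symm, h2.symm⟩⟩
  loopless := ⟨by
    rintro x (h | ⟨_, h⟩)
    · exact G.loopless.irrefl _ h
    · exact H.loopless.irrefl _ h⟩

/-- The strong product of simple graphs. -/
def strongProd {α β : Type*} (G : SimpleGraph α) (H : SimpleGraph β) : SimpleGraph (α × β) where
  Adj x y := (G.Adj x.1 y.1 ∧ x.2 = y.2) ∨ (x.1 = y.1 ∧ H.Adj x.2 y.2) ∨
    (G.Adj x.1 y.1 ∧ H.Adj x.2 y.2)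
  symm := ⟨by
    rintro x y (⟨h, e⟩ | ⟨e, h⟩ | ⟨h1, h2⟩)
    · exact Or.inl ⟨h.symm, e.symm⟩
    · exact Or.inr (Or.inl ⟨e.symm, h.symm⟩)
    · exact Or.inr (Or.inr ⟨h1.symm, h2.symm⟩)⟩
  loopless := ⟨by
    rintro x (⟨h, _⟩ | ⟨_, h⟩ | ⟨h, _⟩)
    · exact G.loopless.irrefl _ h
    · exact H.loopless.irrefl _ h
    · exact G.loopless.irrefl _ h⟩

/-- The minimum number of complete bipartite subgraphs of `G` covering all edges of `G`. -/
noncomputable def bc {α : Type*} (G : SimpleGraph α) : ℕ :=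
  sInf {k | ∃ A B : Fin k → Set α,
    (∀ i a b, a ∈ A i → b ∈ B i → G.Adj a b) ∧
    (∀ u v, G.Adj u v → ∃ i, (u ∈ A i ∧ v ∈ B i) ∨ (v ∈ A i ∧ u ∈ B i))}

/-- `aD G L` is the number of entries of `L` not adjacent to any earlier entry. -/
noncomputable def aD {α : Type*} (G : SimpleGraph α) (L : List α) : ℕ :=
  {i : Fin L.length | ∀ j : Fin L.length, j < i → ¬ G.Adj (L.get j) (L.get i)}.ncard

/-- The vertex cover number of `G`. -/
noncomputable def vertexCoverNum {α : Type*} (G : SimpleGraph α) : ℕ :=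
  sInf {n | ∃ S : Finset α, S.card = n ∧ ∀ u v, G.Adj u v → u ∈ S ∨ v ∈ S}

/-- The independence number of `G`. -/
noncomputable def indepNum {α : Type*} (G : SimpleGraph α) : ℕ :=
  sSup {n | ∃ S : Finset α, S.card = n ∧ ∀ u ∈ S, ∀ v ∈ S, ¬ G.Adj u v}

universe u_forest

lemma isOpenLegal_iff' {α : Type*} (G : SimpleGraph α) (L : List α) :
    IsOpenLegal G L ↔ L.Nodup ∧ ∀ i, (hi : i < L.length) → ∃ w, G.Adj L[i] w ∧
      ∀ j, (hj : j < L.length) → j < i → ¬ G.Adj L[j] w := by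
  unfold IsOpenLegal
  simp only [List.get_eq_getElem]
  constructor
  · rintro ⟨h1, h2⟩
    refine ⟨h1, fun i hi => ?_⟩
    obtain ⟨w, hw1, hw2⟩ := h2 ⟨i, hi⟩
    exact ⟨w, hw1, fun j hj hji => hw2 ⟨j, hj⟩ hji⟩
  · rintro ⟨h1, h2⟩
    refine ⟨h1, fun i => ?_⟩
    obtain ⟨w, hw1, hw2⟩ := h2 i.1 i.2
    exact ⟨w, hw1, fun j hj => hw2 j.1 j.2 hj⟩

lemma vcn_spec {α : Type*} [Fintype α] (G : SimpleGraph α) :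
    ∃ S : Finset α, S.card = _root_.vertexCoverNum G ∧ ∀ u v, G.Adj u v → u ∈ S ∨ v ∈ S := by
  have h : _root_.vertexCoverNum G ∈ {n | ∃ S : Finset α, S.card = n ∧ ∀ u v, G.Adj u v → u ∈ S ∨ v ∈ S} :=
    Nat.sInf_mem ⟨Finset.univ.card, Finset.univ, rfl, fun u v _ => Or.inl (Finset.mem_univ u)⟩
  obtain ⟨S, hS⟩ := h
  exact ⟨S, hS⟩

lemma legal_length_le {α : Type*} (G : SimpleGraph α) (L : List α) (hL : IsOpenLegal G L)
    (S : Finset α) (hS : ∀ u v, G.Adj u v → u ∈ S ∨ v ∈ S) : L.length ≤ 2 * S.card := by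
  classical
  obtain ⟨hnd, hw⟩ := hL
  choose w hw1 hw2 using hw
  set f : Fin L.length → α × Bool :=
    fun i => if L.get i ∈ S then (L.get i, false) else (w i, true) with hf
  have hmem : ∀ i ∈ (Finset.univ : Finset (Fin L.length)),
      f i ∈ S ×ˢ (Finset.univ : Finset Bool) := by
    intro i _
    by_cases h : L.get i ∈ S
    · rw [hf]; simp only [if_pos h]; exact Finset.mk_mem_product h (Finset.mem_univ _)
    · rw [hf]; simp only [if_neg h]
      exact Finset.mk_mem_product ((hS _ _ (hw1 i)).resolve_left h) (Finset.mem_univ _)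
  have key : ∀ i j : Fin L.length, i < j → f i ≠ f j := by
    intro i j hlt hij
    rw [hf] at hij
    simp only at hij
    split_ifs at hij with h1 h2 h2
    · exact (ne_of_lt hlt) (List.nodup_iff_injective_get.mp hnd (congrArg Prod.fst hij))
    · exact absurd (congrArg Prod.snd hij) (by simp)
    · exact absurd (congrArg Prod.snd hij) (by simp)
    · have hww : w i = w j := congrArg Prod.fst hij
      exact hw2 j i hlt (hww ▸ hw1 i)
  have hinj : Set.InjOn f (Finset.univ : Finset (Fin L.length)) := by
    intro i _ j _ hij
    rcases lt_trichotomy i j with h | h | h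
    · exact absurd hij (key i j h)
    · exact h
    · exact absurd hij.symm (key j i h)
  have := Finset.card_le_card_of_injOn f hmem hinj
  simp only [Finset.card_univ, Fintype.card_fin, Finset.card_product, Fintype.card_bool] at this
  omega


lemma exists_leaf {α : Type*} [Fintype α] (G : SimpleGraph α) (hac : G.IsAcyclic)
    {a b : α} (hab : G.Adj a b) : ∃ u v, G.Adj u v ∧ ∀ x, G.Adj u x → x = v := by
  classical
  set s : Set ℕ := {k | ∃ (u v : α) (p : G.Walk u v), p.IsPath ∧ p.length = k} with hs
  have hne : (1 : ℕ) ∈ s := ⟨a, b, Walk.cons hab Walk.nil, by simp [hab.ne], rfl⟩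
  have hbdd : BddAbove s := by
    refine ⟨Fintype.card α, ?_⟩
    rintro k ⟨u, v, p, hp, rfl⟩
    exact le_of_lt hp.length_lt
  have hmem := Nat.sSup_mem ⟨1, hne⟩ hbdd
  obtain ⟨u, v, p, hp, hplen⟩ := hmem
  have hpos : 1 ≤ p.length := hplen.symm ▸ le_csSup hbdd hne
  cases p with
  | nil => simp at hpos
  | @cons _ w _ h q =>
    refine ⟨u, w, h, fun x hx => ?_⟩
    by_contra hxw
    have hqp : q.IsPath ∧ u ∉ q.support := (Walk.cons_isPath_iff h q).mp hp
    by_cases hxs : x ∈ q.support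
    · -- build a cycle
      set r := q.takeUntil x hxs with hr
      have hrp : r.IsPath := hqp.1.takeUntil hxs
      have hur : u ∉ r.support := fun hu => hqp.2 (Walk.support_takeUntil_subset q hxs hu)
      have hcons : (Walk.cons h r).IsPath := (Walk.cons_isPath_iff h r).mpr ⟨hrp, hur⟩
      have hcyc : (Walk.cons hx ((Walk.cons h r).reverse)).IsCycle := by
        rw [Walk.cons_isCycle_iff]
        refine ⟨hcons.reverse, ?_⟩
        rw [Walk.edges_reverse]
        simp only [List.mem_reverse, Walk.edges_cons, List.mem_cons]
        rintro (he | he)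
        · rw [Sym2.eq_iff] at he
          rcases he with ⟨_, hw⟩ | ⟨hu, _⟩
          · exact hxw hw
          · exact h.ne hu
        · exact hur (Walk.fst_mem_support_of_mem_edges r he)
      exact hac _ hcyc
    · -- extend the path
      have hlong : (Walk.cons hx.symm (Walk.cons h q)).IsPath := by
        rw [Walk.cons_isPath_iff]
        constructor
        · exact hp
        · simp only [Walk.support_cons, List.mem_cons]
          push_neg
          exact ⟨hx.ne', hxs⟩
      have : (Walk.cons hx.symm (Walk.cons h q)).length ∈ s := ⟨_, _, _, hlong, rfl⟩
      have hle := le_csSup hbdd this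
      simp [hplen] at hle


lemma side_subsingleton {α : Type*} (G : SimpleGraph α) (hac : G.IsAcyclic) (A B : Set α)
    (h : ∀ a ∈ A, ∀ b ∈ B, G.Adj a b) : A.Subsingleton ∨ B.Subsingleton := by
  by_contra hcon
  push_neg at hcon
  obtain ⟨hA, hB⟩ := hcon
  obtain ⟨a, haA, a', haA', haa⟩ := hA
  obtain ⟨b, hbB, b', hbB', hbb⟩ := hB
  have hab : G.Adj a b := h a haA b hbB
  have hab' : G.Adj a b' := h a haA b' hbB'
  have ha'b : G.Adj a' b := h a' haA' b hbB
  have ha'b' : G.Adj a' b' := h a' haA' b' hbB'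
  have hcyc : (Walk.cons hab' (Walk.cons ha'b'.symm (Walk.cons ha'b
      (Walk.cons hab.symm Walk.nil)))).IsCycle := by
    rw [Walk.cons_isCycle_iff]
    constructor
    · rw [Walk.isPath_def]
      simp only [Walk.support_cons, Walk.support_nil, List.nodup_cons, List.mem_cons,
        List.mem_singleton, List.not_mem_nil, List.nodup_nil, and_true, not_or]
      have := hab.ne; have := hab.ne'; have := hab'.ne; have := hab'.ne'
      have := ha'b.ne; have := ha'b.ne'; have := ha'b'.ne; have := ha'b'.ne'
      have := haa.symm; have := hbb.symm
      tauto
    · simp only [Walk.edges_cons, Walk.edges_nil, List.mem_cons, List.not_mem_nil, or_false,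
        Sym2.eq_iff]
      push_neg
      have := hab.ne; have := hab.ne'; have := hab'.ne; have := hab'.ne'
      have := ha'b.ne; have := ha'b.ne'; have := ha'b'.ne; have := ha'b'.ne'
      have := haa.symm; have := hbb.symm
      tauto
  exact hac _ hcyc



lemma noedge_lower {α : Type*} (G : SimpleGraph α) (hno : ∀ x y, ¬ G.Adj x y) :
    ∃ L, IsOpenLegal G L ∧ 2 * _root_.vertexCoverNum G ≤ L.length := by
  have h0 : _root_.vertexCoverNum G ≤ 0 :=
    Nat.sInf_le ⟨∅, Finset.card_empty, fun p q h => absurd h (hno p q)⟩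
  refine ⟨[], ⟨List.nodup_nil, fun i => absurd i.2 (by simp)⟩, by omega⟩

lemma forest_lower : ∀ (n : ℕ) (α : Type u_forest) [Fintype α] (G : SimpleGraph α), G.IsAcyclic →
    Fintype.card α ≤ n → ∃ L, IsOpenLegal G L ∧ 2 * _root_.vertexCoverNum G ≤ L.length := by
  intro n
  induction n with
  | zero =>
    intro α _ G hac hcard
    have : IsEmpty α := Fintype.card_eq_zero_iff.mp (Nat.le_zero.mp hcard)
    exact noedge_lower G (fun x y => (this.false x).elim)
  | succ n ih =>
    intro α _ G hac hcard
    classical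
    by_cases hedge : ∃ a b, G.Adj a b
    · obtain ⟨a0, b0, hab0⟩ := hedge
      obtain ⟨u, v, huv, hleaf⟩ := exists_leaf G hac hab0
      set G' : SimpleGraph {x : α // x ≠ u ∧ x ≠ v} := G.comap (Subtype.val) with hG'
      have hval : Function.Injective (Subtype.val : {x : α // x ≠ u ∧ x ≠ v} → α) :=
        Subtype.val_injective
      have hac' : G'.IsAcyclic := by
        intro z c hc
        exact hac _ (hc.map (f := SimpleGraph.Hom.comap Subtype.val G) hval)
      have hcard' : Fintype.card {x : α // x ≠ u ∧ x ≠ v} ≤ n := by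
        have h2 : Fintype.card {x : α // x ≠ u ∧ x ≠ v} < Fintype.card α := by
          simpa using Fintype.card_subtype_lt (p := fun x => x ≠ u ∧ x ≠ v) (x := u) (by simp)
        omega
      obtain ⟨L', hL', hlen'⟩ := ih _ G' hac' hcard'
      -- vertex cover bound
      obtain ⟨S', hS'card, hS'cov⟩ := vcn_spec G'
      set S : Finset α := insert v (S'.image Subtype.val) with hS
      have hcov : ∀ x y, G.Adj x y → x ∈ S ∨ y ∈ S := by
        intro x y hxy
        by_cases hxv : x = v
        · exact Or.inl (by simp [hS, hxv])
        by_cases hyv : y = v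
        · exact Or.inr (by simp [hS, hyv])
        by_cases hxu : x = u
        · exact absurd (hleaf y (hxu ▸ hxy)) hyv
        by_cases hyu : y = u
        · exact absurd (hleaf x (hyu ▸ hxy.symm)) hxv
        · rcases hS'cov ⟨x, hxu, hxv⟩ ⟨y, hyu, hyv⟩ hxy with h | h
          · exact Or.inl (Finset.mem_insert_of_mem (Finset.mem_image_of_mem _ h))
          · exact Or.inr (Finset.mem_insert_of_mem (Finset.mem_image_of_mem _ h))
      have hvcn : _root_.vertexCoverNum G ≤ _root_.vertexCoverNum G' + 1 := by
        calc _root_.vertexCoverNum G ≤ S.card := Nat.sInf_le ⟨S, rfl, hcov⟩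
        _ ≤ (S'.image Subtype.val).card + 1 := Finset.card_insert_le _ _
        _ ≤ _root_.vertexCoverNum G' + 1 := by
            rw [Finset.card_image_of_injective _ hval, hS'card]
      -- the sequence
      obtain ⟨hnd', hw'⟩ := (isOpenLegal_iff' G' L').mp hL'
      set M : List α := L'.map Subtype.val with hM
      have hMlen : M.length = L'.length := List.length_map _
      have hMget : ∀ k, (hk : k < M.length) → M[k] = (L'[k]'(by omega)).val := by
        intro k hk; simp only [hM, List.getElem_map]
      have hMne : ∀ k, (hk : k < M.length) → M[k] ≠ u ∧ M[k] ≠ v := by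
        intro k hk; rw [hMget k hk]; exact (L'[k]'(by omega)).2
      have huM : u ∉ M := by
        intro hmem
        obtain ⟨k, hk, hkeq⟩ := List.getElem_of_mem hmem
        exact (hMne k hk).1 hkeq
      have hvM : v ∉ M := by
        intro hmem
        obtain ⟨k, hk, hkeq⟩ := List.getElem_of_mem hmem
        exact (hMne k hk).2 hkeq
      refine ⟨u :: (M ++ [v]), ?_, ?_⟩
      · rw [isOpenLegal_iff']
        constructor
        · simp only [List.nodup_cons, List.mem_append, List.mem_singleton, List.nodup_append,
            List.nodup_singleton, List.disjoint_singleton]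
          refine ⟨by push_neg; exact ⟨huM, huv.ne⟩, ?_⟩
          refine ⟨hnd'.map hval, by simp; exact fun a ha hav => hvM (hav ▸ ha)⟩
        · intro i hi
          simp only [List.length_cons, List.length_append, List.length_singleton, List.length_nil] at hi
          have hget0 : (u :: (M ++ [v]))[0] = u := rfl
          have hgetM : ∀ k, (hk : k < M.length) →
              (u :: (M ++ [v]))[k+1]'(by simp; omega) = M[k] := by
            intro k hk
            rw [List.getElem_cons_succ, List.getElem_append_left hk]
          have hgetv : (u :: (M ++ [v]))[M.length+1]'(by simp) = v := by
            rw [List.getElem_cons_succ, List.getElem_append_right (le_refl _)]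
            simp
          rcases i with _ | k
          · exact ⟨v, by rw [hget0]; exact huv, fun j hj hj0 => absurd hj0 (by omega)⟩
          · by_cases hk : k < M.length
            · obtain ⟨w', hw'adj, hw'pre⟩ := hw' k (by omega)
              refine ⟨w'.val, ?_, ?_⟩
              · rw [hgetM k hk, hMget k hk]
                exact hw'adj
              · intro j hj hjlt
                rcases j with _ | m
                · rw [hget0]
                  intro hadj
                  exact w'.2.2 (hleaf _ hadj)
                · have hm : m < M.length := by omega
                  rw [hgetM m hm, hMget m hm]
                  exact hw'pre m (by omega) (by omega)
            · have hkeq : k = M.length := by omega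
              subst hkeq
              refine ⟨u, ?_, ?_⟩
              · rw [hgetv]; exact huv.symm
              · intro j hj hjlt
                rcases j with _ | m
                · rw [hget0]; exact G.loopless.irrefl u
                · have hm : m < M.length := by omega
                  rw [hgetM m hm]
                  intro hadj
                  exact (hMne m hm).2 (hleaf _ hadj.symm)
      · have : _root_.vertexCoverNum G' + 1 ≤ _root_.vertexCoverNum G' + 1 := le_refl _
        simp only [List.length_cons, List.length_append, List.length_singleton]
        omega
    · push_neg at hedge
      exact noedge_lower G hedge


lemma vcn_mem_bcSet {α : Type*} [Fintype α] (G : SimpleGraph α) :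
    _root_.vertexCoverNum G ∈ {k | ∃ A B : Fin k → Set α,
      (∀ i a b, a ∈ A i → b ∈ B i → G.Adj a b) ∧
      (∀ u v, G.Adj u v → ∃ i, (u ∈ A i ∧ v ∈ B i) ∨ (v ∈ A i ∧ u ∈ B i))} := by
  classical
  obtain ⟨S, hcard, hcov⟩ := vcn_spec G
  set e : S ≃ Fin (_root_.vertexCoverNum G) := S.equivFinOfCardEq hcard with he
  refine ⟨fun i => {(e.symm i).val}, fun i => {y | G.Adj (e.symm i).val y}, ?_, ?_⟩
  · rintro i a b rfl hb
    exact hb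
  · intro p q hpq
    rcases hcov p q hpq with h | h
    · exact ⟨e ⟨p, h⟩, Or.inl ⟨by simp, by simp [hpq]⟩⟩
    · exact ⟨e ⟨q, h⟩, Or.inr ⟨by simp, by simp [hpq.symm]⟩⟩

lemma bc_le_vcn {α : Type*} [Fintype α] (G : SimpleGraph α) : bc G ≤ _root_.vertexCoverNum G :=
  Nat.sInf_le (vcn_mem_bcSet G)

lemma vcn_le_bc {α : Type*} [Fintype α] [Nonempty α] (G : SimpleGraph α)
    (hac : G.IsAcyclic) : _root_.vertexCoverNum G ≤ bc G := by
  classical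
  have hmem := Nat.sInf_mem (⟨_, vcn_mem_bcSet G⟩ : Set.Nonempty {k | ∃ A B : Fin k → Set α,
      (∀ i a b, a ∈ A i → b ∈ B i → G.Adj a b) ∧
      (∀ u v, G.Adj u v → ∃ i, (u ∈ A i ∧ v ∈ B i) ∨ (v ∈ A i ∧ u ∈ B i))})
  obtain ⟨A, B, hcomp, hcov⟩ := hmem
  have hchoice : ∀ i : Fin (bc G), ∃ x : α, ∀ p q, ((p ∈ A i ∧ q ∈ B i) ∨ (q ∈ A i ∧ p ∈ B i)) →
      p = x ∨ q = x := by
    intro i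
    rcases side_subsingleton G hac (A i) (B i) (fun a ha b hb => hcomp i a b ha hb) with hs | hs
    · by_cases hA : (A i).Nonempty
      · obtain ⟨a, ha⟩ := hA
        refine ⟨a, fun p q hmem => ?_⟩
        rcases hmem with ⟨h1, _⟩ | ⟨h1, _⟩
        · exact Or.inl (hs h1 ha)
        · exact Or.inr (hs h1 ha)
      · refine ⟨Classical.arbitrary α, fun p q hmem => ?_⟩
        rcases hmem with ⟨h1, _⟩ | ⟨h1, _⟩ <;> exact absurd ⟨_, h1⟩ hA
    · by_cases hB : (B i).Nonempty
      · obtain ⟨b, hb⟩ := hB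
        refine ⟨b, fun p q hmem => ?_⟩
        rcases hmem with ⟨_, h2⟩ | ⟨_, h2⟩
        · exact Or.inr (hs h2 hb)
        · exact Or.inl (hs h2 hb)
      · refine ⟨Classical.arbitrary α, fun p q hmem => ?_⟩
        rcases hmem with ⟨_, h2⟩ | ⟨_, h2⟩ <;> exact absurd ⟨_, h2⟩ hB
  choose c hc using hchoice
  have hcov' : ∀ p q, G.Adj p q → p ∈ Finset.univ.image c ∨ q ∈ Finset.univ.image c := by
    intro p q hpq
    obtain ⟨i, hi⟩ := hcov p q hpq
    rcases hc i p q hi with rfl | rfl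
    · exact Or.inl (Finset.mem_image_of_mem c (Finset.mem_univ i))
    · exact Or.inr (Finset.mem_image_of_mem c (Finset.mem_univ i))
  calc _root_.vertexCoverNum G ≤ (Finset.univ.image c).card := Nat.sInf_le ⟨_, rfl, hcov'⟩
  _ ≤ (Finset.univ : Finset (Fin (bc G))).card := Finset.card_image_le
  _ = bc G := by simp


theorem grundyT_tree_eq_two_bc {α : Type*} [Fintype α]
    (T : SimpleGraph α) (hT : T.IsTree) (hiso : ∀ v, ∃ w, T.Adj v w) :
    grundyT T = 2 * bc T ∧ bc T = _root_.vertexCoverNum T := by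
  classical
  have hac := hT.2
  have hne : Nonempty α := hT.1.nonempty
  have hbc : bc T = _root_.vertexCoverNum T := le_antisymm (bc_le_vcn T) (vcn_le_bc T hac)
  refine ⟨?_, hbc⟩
  rw [hbc]
  obtain ⟨S, hScard, hScov⟩ := vcn_spec T
  have hub : ∀ n ∈ {n | ∃ L : List α, IsOpenLegal T L ∧ L.length = n},
      n ≤ 2 * _root_.vertexCoverNum T := by
    rintro n ⟨L, hL, rfl⟩
    calc L.length ≤ 2 * S.card := legal_length_le T L hL S hScov
    _ = 2 * _root_.vertexCoverNum T := by rw [hScard]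
  unfold grundyT
  apply le_antisymm
  · exact csSup_le ⟨0, [], ⟨List.nodup_nil, fun i => absurd i.2 (by simp)⟩, rfl⟩ hub
  · obtain ⟨L, hL, hlen⟩ := forest_lower (Fintype.card α) α T hac le_rfl
    exact le_trans hlen (le_csSup ⟨2 * _root_.vertexCoverNum T, hub⟩ ⟨L, hL, rfl⟩)
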